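/- Let g be a finite-dimensional real nilpotent Lie algebra with a nice basis {e_1,…,e_n} such that for every basis element z lying in the center z(g), the number of ordered pairs (i,j) with e_i →^{e_j} z is at least n/2. Then for every arrow-breaking involution σ of the basis and every basis element z lying in z(g), the element σ(z) does not lie in z(g). -/

import Mathlib

open scoped BigOperators

namespace ArrowBreakingPaper

variable {ι : Type*} {g : Type*} [LieRing g] [LieAlgebra ℝ g]

/-- `⁅e i, e j⁆` is a nonzero multiple of `e k` (the arrow `e i →^{e j} e k`). -/
def Arrow (e : ι → g) (i j k : ι) : Prop :=
  ∃ c : ℝ, c ≠ 0 ∧ ⁅e i, e j⁆ = c • e k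

/-- A basis is *nice* if each bracket of two basis vectors is a multiple of a single basis
vector, and for all `i`, `k` there is at most one `j` such that the `e k`-coefficient of
`⁅e i, e j⁆` is nonzero. -/
def IsNiceBasis (e : Module.Basis ι ℝ g) : Prop :=
  (∀ i j : ι, ∃ (k : ι) (c : ℝ), ⁅e i, e j⁆ = c • e k) ∧
  (∀ i k j j' : ι, e.repr ⁅e i, e j⁆ k ≠ 0 → e.repr ⁅e i, e j'⁆ k ≠ 0 → j = j')

/-- An *arrow-breaking involution* of the (nice) basis `e`. -/
def IsArrowBreaking (e : ι → g) (σ : Equiv.Perm ι) : Prop :=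
  (∀ i, σ (σ i) = i) ∧
  (∀ i j k, Arrow e i j k → ∀ l, ¬ Arrow e l (σ j) (σ k)) ∧
  (∀ i j k, Arrow e i j k → ∀ m, ¬ Arrow e (σ i) (σ j) m)

/-- A `σ`-diagonal metric: `⟨e i, e (σ j)⟩ = gᵢ δᵢⱼ` with all `gᵢ ≠ 0` and `g_{σ i} = gᵢ`. -/
def IsSigmaDiagonal [DecidableEq ι] (e : Module.Basis ι ℝ g) (σ : Equiv.Perm ι)
    (B : LinearMap.BilinForm ℝ g) : Prop :=
  ∃ gv : ι → ℝ, (∀ i, gv i ≠ 0) ∧ (∀ i, gv (σ i) = gv i) ∧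
    ∀ i j, B (e i) (e (σ j)) = if i = j then gv i else 0

/-- Symmetry of a bilinear form. -/
def IsSymm (B : LinearMap.BilinForm ℝ g) : Prop := ∀ x y : g, B x y = B y x

/-- Nondegeneracy of a bilinear form. -/
def Nondeg (B : LinearMap.BilinForm ℝ g) : Prop :=
  ∀ v : g, (∀ w : g, B v w = 0) → v = 0

/-- The Gram matrix of a bilinear form in a basis. -/
noncomputable def gram [Fintype ι] (e : Module.Basis ι ℝ g) (B : LinearMap.BilinForm ℝ g) :
    Matrix ι ι ℝ := Matrix.of fun i j => B (e i) (e j)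

/-- The Ricci curvature `ric(v,w) = ½⟨dv♭, dw♭⟩ − ½⟨ad v, ad w⟩` written in the
coordinates of a basis `e`, where `dα(x,y) = −α(⁅x,y⁆)` and the scalar products on
`Λ²g*` and `g*⊗g` are induced by the dual metric (inverse Gram matrix). -/
noncomputable def ricci [Fintype ι] [DecidableEq ι] (e : Module.Basis ι ℝ g)
    (B : LinearMap.BilinForm ℝ g) (v w : g) : ℝ :=
  (1/2) * ((1/2) * ∑ i, ∑ j, ∑ k, ∑ l,
      (gram e B)⁻¹ i k * (gram e B)⁻¹ j l * (-(B v ⁅e i, e j⁆)) * (-(B w ⁅e k, e l⁆)))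
  - (1/2) * ∑ i, ∑ j, (gram e B)⁻¹ i j * B ⁅v, e i⁆ ⁅w, e j⁆

/-- Ricci-flatness of a metric on a Lie algebra. -/
def IsRicciFlat (B : LinearMap.BilinForm ℝ g) : Prop :=
  ∀ (m : ℕ) (e : Module.Basis (Fin m) ℝ g) (v w : g), ricci e B v w = 0

/-- The Koszul formula characterizing the Levi-Civita connection. -/
def IsLeviCivita (B : LinearMap.BilinForm ℝ g) (nab : g → g → g) : Prop :=
  ∀ u v w : g, 2 * B (nab u v) w = B ⁅u, v⁆ w - B ⁅v, w⁆ u + B ⁅w, u⁆ v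

/-- The curvature `R(u,v)w = ∇_{⁅u,v⁆} w − ∇_u ∇_v w + ∇_v ∇_u w`. -/
def curv (nab : g → g → g) (u v w : g) : g :=
  nab ⁅u, v⁆ w - nab u (nab v w) + nab v (nab u w)

/-- Flatness of a metric on a Lie algebra. -/
def IsFlat (B : LinearMap.BilinForm ℝ g) : Prop :=
  ∃ nab : g → g → g, IsLeviCivita B nab ∧ ∀ u v w : g, curv nab u v w = 0


/-- Arrows are symmetric in source/label (up to sign of coefficient). -/
lemma Arrow.swap {e : ι → g} {i j k : ι} (h : Arrow e i j k) : Arrow e j i k := by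
  obtain ⟨c, hc, hb⟩ := h
  exact ⟨-c, neg_ne_zero.mpr hc, by rw [← lie_skew, hb, neg_smul]⟩

/-- A central basis element is never the source of an arrow. -/
lemma not_arrow_of_central {n : ℕ} (e : Module.Basis (Fin n) ℝ g) {z : Fin n}
    (hz : ∀ x : g, ⁅x, e z⁆ = 0) (j k : Fin n) : ¬ Arrow (⇑e) z j k := by
  rintro ⟨c, hc, hb⟩
  have h0 : ⁅e z, e j⁆ = 0 := by rw [← lie_skew, hz (e j), neg_zero]
  rw [h0] at hb
  exact (e.ne_zero k) (by simpa [smul_eq_zero, hc] using hb.symm)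

/-- The coefficient of the target of an arrow is nonzero. -/
lemma repr_ne_zero_of_arrow {n : ℕ} (e : Module.Basis (Fin n) ℝ g) {i j k : Fin n}
    (h : Arrow (⇑e) i j k) : e.repr ⁅e i, e j⁆ k ≠ 0 := by
  obtain ⟨c, hc, hb⟩ := h
  rw [hb]
  simpa [Module.Basis.repr_self] using hc

/-- If every central node of a nice basis has at least `n/2` incoming arrows,
then any arrow-breaking involution maps central basis elements outside the center. -/
theorem statement7 {n : ℕ} {g : Type*} [LieRing g] [LieAlgebra ℝ g]
    [LieRing.IsNilpotent g]
    (e : Module.Basis (Fin n) ℝ g) (hnice : IsNiceBasis e)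
    (hmany : ∀ z : Fin n, (∀ x : g, ⁅x, e z⁆ = 0) →
      n ≤ 2 * Set.ncard {p : Fin n × Fin n | Arrow (⇑e) p.1 p.2 z}) :
    ∀ σ : Equiv.Perm (Fin n), IsArrowBreaking (⇑e) σ →
      ∀ z : Fin n, (∀ x : g, ⁅x, e z⁆ = 0) →
        ¬ (∀ x : g, ⁅x, e (σ z)⁆ = 0) := by
  rintro σ ⟨hinv, h2, _h3⟩ z hz hz'
  -- the sets of arrows into `z` and into `σ z`
  set P : Set (Fin n × Fin n) := {p | Arrow (⇑e) p.1 p.2 z} with hP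
  set P' : Set (Fin n × Fin n) := {p | Arrow (⇑e) p.1 p.2 (σ z)} with hP'
  -- sources of those arrows
  set S : Set (Fin n) := Prod.fst '' P with hS
  set S' : Set (Fin n) := Prod.fst '' P' with hS'
  -- first projections are injective on arrow sets, by niceness
  have hinj : ∀ (w : Fin n) (p q : Fin n × Fin n), Arrow (⇑e) p.1 p.2 w →
      Arrow (⇑e) q.1 q.2 w → p.1 = q.1 → p = q := by
    intro w p q hp hq h1
    have := hnice.2 p.1 w p.2 q.2 (repr_ne_zero_of_arrow e hp)
      (by rw [h1]; exact repr_ne_zero_of_arrow e hq)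
    exact Prod.ext h1 this
  have hcardP : P.ncard = S.ncard :=
    (Set.ncard_image_of_injOn (fun p hp q hq => hinj z p q hp hq)).symm
  have hcardP' : P'.ncard = S'.ncard :=
    (Set.ncard_image_of_injOn (fun p hp q hq => hinj (σ z) p q hp hq)).symm
  -- σ '' S and S' are disjoint
  have hdisj : Disjoint (σ '' S) S' := by
    rw [Set.disjoint_left]
    rintro i ⟨j, ⟨p, hp, hp1⟩, rfl⟩ ⟨q, hq, hq1⟩
    -- `q.2 →^{σ j} σ z` is an arrow, forbidden by arrow-breaking applied to `p.2 →^{p.1} z`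
    have hparr : Arrow (⇑e) p.1 p.2 z := hp
    have hqarr : Arrow (⇑e) q.1 q.2 (σ z) := hq
    have harr : Arrow (⇑e) q.2 (σ p.1) (σ z) := by
      have := hqarr.swap
      rwa [hq1, ← hp1] at this
    exact h2 p.2 p.1 z hparr.swap q.2 harr
  -- `z` is in neither `σ '' S` nor `S'`
  have hzS : z ∉ σ '' S := by
    rintro ⟨j, ⟨p, hp, hp1⟩, hj⟩
    have hparr : Arrow (⇑e) p.1 p.2 z := hp
    have h1 : p.1 = σ z := by rw [hp1, ← hinv j, hj]
    rw [h1] at hparr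
    exact not_arrow_of_central e hz' p.2 z hparr
  have hzS' : z ∉ S' := by
    rintro ⟨p, hp, hp1⟩
    have hparr : Arrow (⇑e) p.1 p.2 (σ z) := hp
    rw [hp1] at hparr
    exact not_arrow_of_central e hz p.2 (σ z) hparr
  -- cardinality bookkeeping
  have hfin1 : (σ '' S).Finite := Set.toFinite _
  have hfin2 : S'.Finite := Set.toFinite _
  have hsub : σ '' S ∪ S' ⊆ {z}ᶜ := by
    intro i hi hiz
    rcases hi with hi | hi
    · exact hzS (by rwa [Set.mem_singleton_iff.mp hiz] at hi)
    · exact hzS' (by rwa [Set.mem_singleton_iff.mp hiz] at hi)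
  have hle : (σ '' S ∪ S').ncard ≤ ({z}ᶜ : Set (Fin n)).ncard :=
    Set.ncard_le_ncard hsub (Set.toFinite _)
  have hcompl : ({z}ᶜ : Set (Fin n)).ncard + 1 = n := by
    have h1 : ({z}ᶜ : Set (Fin n)).ncard + ({z} : Set (Fin n)).ncard = n := by
      rw [← Set.ncard_union_eq (disjoint_compl_left) (Set.toFinite _) (Set.toFinite _),
        Set.compl_union_self, Set.ncard_univ, Nat.card_eq_fintype_card, Fintype.card_fin]
    simpa using h1
  have hunion : (σ '' S ∪ S').ncard = S.ncard + S'.ncard := by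
    rw [Set.ncard_union_eq hdisj hfin1 hfin2,
      Set.ncard_image_of_injective _ σ.injective]
  have hm1 := hmany z hz
  have hm2 := hmany (σ z) hz'
  rw [← hP, hcardP] at hm1
  rw [← hP', hcardP'] at hm2
  omega

end ArrowBreakingPaper
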